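/- Let G be a connected weighted graph, s,t vertices, and ε > 0. Let H₀ be a subgraph of G with d_{H₀}(s,t) > d_G(s,t) + (2+ε)·W(s,t), and let H₁ be H₀ together with all edges of π(s,t). Let a, y, b be vertices appearing in this order along π(s,t) such that d_{H₀}(s,a) = d_G(s,a) and d_{H₀}(b,t) = d_G(b,t), and let x be a vertex joined in H₀ to y by an edge of weight at most W(s,t). Then: (1) d_{H₁}(a,x) ≤ d_G(a,x) + 2·W(s,t) and d_{H₁}(b,x) ≤ d_G(b,x) + 2·W(s,t); and (2) d_{H₀}(a,x) − d_{H₁}(a,x) > ε·W(s,t)/2 or d_{H₀}(b,x) − d_{H₁}(b,x) > ε·W(s,t)/2. -/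

import Mathlib

open scoped ENNReal Classical

/-- The total weight of a walk: the sum of the weights of its edges. -/
noncomputable def walkWeight {V : Type} (G : SimpleGraph V) (w : Sym2 V → ℝ≥0∞)
    {s t : V} (p : G.Walk s t) : ℝ≥0∞ :=
  (p.edges.map w).sum

/-- Shortest-path distance in the weighted graph `(G, w)`, equal to `⊤` if there is no path. -/
noncomputable def gdist {V : Type} (G : SimpleGraph V) (w : Sym2 V → ℝ≥0∞)
    (s t : V) : ℝ≥0∞ :=
  ⨅ p : G.Walk s t, walkWeight G w p

/-- The maximum edge weight along a walk (0 for the trivial walk). -/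
noncomputable def maxEdge {V : Type} (G : SimpleGraph V) (w : Sym2 V → ℝ≥0∞)
    {s t : V} (p : G.Walk s t) : ℝ≥0∞ :=
  (p.edges.map w).foldr max 0

/-- `π` assigns to each ordered vertex pair a shortest path: a walk whose total
weight equals the shortest-path distance. -/
def IsShortestPathScheme {V : Type} (G : SimpleGraph V) (w : Sym2 V → ℝ≥0∞)
    (π : (s t : V) → G.Walk s t) : Prop :=
  ∀ s t : V, walkWeight G w (π s t) = gdist G w s t

/-- The edge weights are positive and finite on all edges of `G`. -/
def PosWeights {V : Type} (G : SimpleGraph V) (w : Sym2 V → ℝ≥0∞) : Prop :=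
  ∀ e ∈ G.edgeSet, 0 < w e ∧ w e ≠ ⊤

section Helpers
variable {V : Type} {G : SimpleGraph V} (w : Sym2 V → ℝ≥0∞)

lemma walkWeight_eq_of_edges_eq {H : SimpleGraph V} {u v u' v' : V}
    (p : G.Walk u v) (q : H.Walk u' v') (h : p.edges = q.edges) :
    walkWeight G w p = walkWeight H w q := by simp [walkWeight, h]

lemma walkWeight_append' {u v x : V} (p : G.Walk u v) (q : G.Walk v x) :
    walkWeight G w (p.append q) = walkWeight G w p + walkWeight G w q := by
  simp [walkWeight, SimpleGraph.Walk.edges_append]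

lemma gdist_le' {u v : V} (p : G.Walk u v) : gdist G w u v ≤ walkWeight G w p :=
  iInf_le _ p

lemma walkWeight_reverse' {u v : V} (p : G.Walk u v) :
    walkWeight G w p.reverse = walkWeight G w p := by
  simp [walkWeight, SimpleGraph.Walk.edges_reverse, List.sum_reverse]

lemma gdist_comm' (u v : V) : gdist G w u v = gdist G w v u := by
  have key : ∀ (a b : V), gdist G w a b ≤ gdist G w b a := fun a b =>
    le_iInf fun p => (gdist_le' w p.reverse).trans_eq (walkWeight_reverse' w p)
  exact le_antisymm (key u v) (key v u)

lemma gdist_triangle' (u v x : V) :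
    gdist G w u x ≤ gdist G w u v + gdist G w v x := by
  conv_rhs => rw [gdist, gdist, ENNReal.iInf_add]
  refine le_iInf fun p => ?_
  rw [ENNReal.add_iInf]
  refine le_iInf fun q => ?_
  exact (gdist_le' w (p.append q)).trans (le_of_eq (walkWeight_append' w p q))

lemma gdist_anti {H : SimpleGraph V} (hle : H ≤ G) (u v : V) :
    gdist G w u v ≤ gdist H w u v :=
  le_iInf fun p =>
    (gdist_le' w (p.transfer G fun e he =>
      SimpleGraph.edgeSet_mono hle (p.edges_subset_edgeSet he))).trans_eq
      (walkWeight_eq_of_edges_eq w _ p (SimpleGraph.Walk.edges_transfer p _))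

lemma walkWeight_ne_top' (hw : PosWeights G w) {u v : V} (p : G.Walk u v) :
    walkWeight G w p ≠ ⊤ := by
  induction p with
  | nil => simp [walkWeight]
  | cons h p ih =>
    simp only [walkWeight, SimpleGraph.Walk.edges_cons, List.map_cons, List.sum_cons]
    exact ENNReal.add_ne_top.mpr ⟨(hw _ h).2, ih⟩

end Helpers

/-- Set-off/improvement lemma for `+(2+ε)W(·,·)` spanner completion.
`H₀` is a subgraph still violating the `+(2+ε)W(s,t)` bound for `(s,t)`, `H₁` is `H₀`
plus all edges of `π(s,t)`; `a, y, b` appear in this order along `π(s,t)`, with `s`–`a` and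
`b`–`t` distances already exact in `H₀`, and `x` is joined in `H₀` to `y` by an edge of
weight at most `W(s,t)`. Then the pairs `(a,x)` and `(b,x)` are set off in `H₁`, and at
least one of them improves by more than `ε·W(s,t)/2`. -/
theorem improvements_two_plus_eps
    (V : Type) [Fintype V] (G : SimpleGraph V) (w : Sym2 V → ℝ≥0∞)
    (hconn : G.Connected) (hw : PosWeights G w)
    (π : (s t : V) → G.Walk s t) (hπ : IsShortestPathScheme G w π)
    (s t : V) (ε : ℝ) (hε : 0 < ε)
    (H₀ H₁ : SimpleGraph V) (hH₀ : H₀ ≤ G)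
    (hviol : gdist H₀ w s t >
      gdist G w s t + ENNReal.ofReal (2 + ε) * maxEdge G w (π s t))
    (hH₁ : H₁ = H₀ ⊔ SimpleGraph.fromEdgeSet {e | e ∈ (π s t).edges})
    (a y b x : V)
    (p₁ : G.Walk s a) (p₂ : G.Walk a y) (p₃ : G.Walk y b) (p₄ : G.Walk b t)
    (horder : π s t = p₁.append (p₂.append (p₃.append p₄)))
    (hsa : gdist H₀ w s a = gdist G w s a)
    (hbt : gdist H₀ w b t = gdist G w b t)
    (hx : H₀.Adj x y ∧ w s(x, y) ≤ maxEdge G w (π s t)) :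
    (gdist H₁ w a x ≤ gdist G w a x + 2 * maxEdge G w (π s t) ∧
      gdist H₁ w b x ≤ gdist G w b x + 2 * maxEdge G w (π s t)) ∧
    (gdist H₀ w a x - gdist H₁ w a x > ENNReal.ofReal (ε / 2) * maxEdge G w (π s t) ∨
      gdist H₀ w b x - gdist H₁ w b x > ENNReal.ofReal (ε / 2) * maxEdge G w (π s t)) := by
  obtain ⟨hadj, hwxy⟩ := hx
  set W := maxEdge G w (π s t) with hWdef
  have hle01 : H₀ ≤ H₁ := by rw [hH₁]; exact le_sup_left
  -- edges of π s t lie in H₁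
  have hπedges : ∀ e ∈ (π s t).edges, e ∈ H₁.edgeSet := by
    intro e he
    rw [hH₁, SimpleGraph.edgeSet_sup]
    right
    rw [SimpleGraph.edgeSet_fromEdgeSet]
    exact ⟨he, (π s t).edges_subset_edgeSet he |> G.not_isDiag_of_mem_edgeSet⟩
  have hedges : (π s t).edges = p₁.edges ++ (p₂.edges ++ (p₃.edges ++ p₄.edges)) := by
    rw [horder]; simp [SimpleGraph.Walk.edges_append]
  have hp₂ : ∀ e ∈ p₂.edges, e ∈ H₁.edgeSet := fun e he =>
    hπedges e (by rw [hedges]; simp [he])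
  have hp₃ : ∀ e ∈ p₃.reverse.edges, e ∈ H₁.edgeSet := fun e he =>
    hπedges e (by rw [hedges]; simp at he; simp [he])
  have hyx : H₁.Adj y x := hle01 hadj.symm
  -- walks in H₁ witnessing the distances
  have hqa : gdist H₁ w a x ≤ walkWeight G w p₂ + w s(x, y) := by
    refine (gdist_le' w ((p₂.transfer H₁ hp₂).append
      (SimpleGraph.Walk.cons hyx SimpleGraph.Walk.nil))).trans (le_of_eq ?_)
    rw [walkWeight_append']
    congr 1
    · exact (walkWeight_eq_of_edges_eq w _ p₂ (SimpleGraph.Walk.edges_transfer p₂ _))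
    · simp [walkWeight]
      exact congrArg w (Sym2.eq_swap)
  have hqb : gdist H₁ w b x ≤ walkWeight G w p₃ + w s(x, y) := by
    refine (gdist_le' w ((p₃.reverse.transfer H₁ hp₃).append
      (SimpleGraph.Walk.cons hyx SimpleGraph.Walk.nil))).trans (le_of_eq ?_)
    rw [walkWeight_append']
    congr 1
    · exact (walkWeight_eq_of_edges_eq w _ p₃.reverse
        (SimpleGraph.Walk.edges_transfer p₃.reverse _)).trans (walkWeight_reverse' w p₃)
    · simp [walkWeight]
      exact congrArg w (Sym2.eq_swap)
  -- finiteness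
  have hfin₁ : walkWeight G w p₁ ≠ ⊤ := walkWeight_ne_top' w hw p₁
  have hfin₃ : walkWeight G w p₃ ≠ ⊤ := walkWeight_ne_top' w hw p₃
  have hfin₄ : walkWeight G w p₄ ≠ ⊤ := walkWeight_ne_top' w hw p₄
  -- total weight
  have htot : walkWeight G w p₁ + (walkWeight G w p₂ + (walkWeight G w p₃ + walkWeight G w p₄))
      = gdist G w s t := by
    rw [← hπ s t, horder]
    simp [walkWeight_append']
  have htri4 : gdist G w s t ≤
      gdist G w s a + (gdist G w a y + (gdist G w y b + gdist G w b t)) :=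
    (gdist_triangle' w s a t).trans (add_le_add le_rfl
      ((gdist_triangle' w a y t).trans (add_le_add le_rfl (gdist_triangle' w y b t))))
  have hd₁ : gdist G w s a ≤ walkWeight G w p₁ := gdist_le' w p₁
  have hd₄ : gdist G w b t ≤ walkWeight G w p₄ := gdist_le' w p₄
  -- subpaths of shortest paths are shortest
  have hw₂ : walkWeight G w p₂ ≤ gdist G w a y := by
    have key : walkWeight G w p₁ + (walkWeight G w p₂ + (walkWeight G w p₃ + walkWeight G w p₄))
        ≤ walkWeight G w p₁ + (gdist G w a y + (walkWeight G w p₃ + walkWeight G w p₄)) := by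
      rw [htot]
      refine htri4.trans ?_
      gcongr
      exact gdist_le' w p₃
    rw [ENNReal.add_le_add_iff_left hfin₁,
      ENNReal.add_le_add_iff_right (ENNReal.add_ne_top.mpr ⟨hfin₃, hfin₄⟩)] at key
    exact key
  have hw₃ : walkWeight G w p₃ ≤ gdist G w y b := by
    have key : walkWeight G w p₁ + (walkWeight G w p₂ + (walkWeight G w p₃ + walkWeight G w p₄))
        ≤ walkWeight G w p₁ + (walkWeight G w p₂ + (gdist G w y b + walkWeight G w p₄)) := by
      rw [htot]
      refine htri4.trans ?_
      gcongr
      exact gdist_le' w p₂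
    rw [ENNReal.add_le_add_iff_left hfin₁,
      ENNReal.add_le_add_iff_left (walkWeight_ne_top' w hw p₂),
      ENNReal.add_le_add_iff_right hfin₄] at key
    exact key
  have hGxy : gdist G w x y ≤ w s(x, y) := by
    refine (gdist_le' w (SimpleGraph.Walk.cons (hH₀ hadj) SimpleGraph.Walk.nil)).trans
      (le_of_eq ?_)
    simp [walkWeight]
  -- Part 1
  have part1a : gdist H₁ w a x ≤ gdist G w a x + 2 * W :=
    calc gdist H₁ w a x ≤ walkWeight G w p₂ + w s(x, y) := hqa
      _ ≤ gdist G w a y + W := add_le_add hw₂ hwxy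
      _ ≤ (gdist G w a x + gdist G w x y) + W := add_le_add_left (gdist_triangle' w a x y) _
      _ ≤ (gdist G w a x + W) + W := by gcongr; exact hGxy.trans hwxy
      _ = gdist G w a x + 2 * W := by ring
  have part1b : gdist H₁ w b x ≤ gdist G w b x + 2 * W :=
    calc gdist H₁ w b x ≤ walkWeight G w p₃ + w s(x, y) := hqb
      _ ≤ gdist G w y b + W := add_le_add hw₃ hwxy
      _ = gdist G w b y + W := by rw [gdist_comm' w y b]
      _ ≤ (gdist G w b x + gdist G w x y) + W :=
          add_le_add_left (gdist_triangle' w b x y) _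
      _ ≤ (gdist G w b x + W) + W := by gcongr; exact hGxy.trans hwxy
      _ = gdist G w b x + 2 * W := by ring
  refine ⟨⟨part1a, part1b⟩, ?_⟩
  by_contra hcon
  push_neg at hcon
  obtain ⟨h1, h2⟩ := hcon
  set k := ENNReal.ofReal (ε / 2) * W with hkdef
  have ha : gdist H₀ w a x ≤ k + (walkWeight G w p₂ + W) :=
    (tsub_le_iff_right.mp h1).trans (add_le_add_right (hqa.trans (add_le_add_right hwxy _)) _) |>.trans
      (le_of_eq (by ring))
  have hb : gdist H₀ w b x ≤ k + (walkWeight G w p₃ + W) :=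
    (tsub_le_iff_right.mp h2).trans (add_le_add_right (hqb.trans (add_le_add_right hwxy _)) _) |>.trans
      (le_of_eq (by ring))
  have hkW : 2 * W + 2 * k = ENNReal.ofReal (2 + ε) * W := by
    rw [hkdef]
    rw [ENNReal.ofReal_add (by norm_num) hε.le]
    have h2k : (2 : ℝ≥0∞) * ENNReal.ofReal (ε / 2) = ENNReal.ofReal ε := by
      rw [← ENNReal.ofReal_ofNat, ← ENNReal.ofReal_mul (by norm_num)]
      congr 1
      ring
    rw [add_mul, ← mul_assoc, h2k]
    norm_num
  have hfinal : gdist H₀ w s t ≤ gdist G w s t + ENNReal.ofReal (2 + ε) * W :=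
    calc gdist H₀ w s t
        ≤ gdist H₀ w s x + gdist H₀ w x t := gdist_triangle' w s x t
      _ ≤ (gdist H₀ w s a + gdist H₀ w a x) + (gdist H₀ w x b + gdist H₀ w b t) :=
          add_le_add (gdist_triangle' w s a x) (gdist_triangle' w x b t)
      _ = (gdist G w s a + gdist H₀ w a x) + (gdist H₀ w b x + gdist G w b t) := by
          rw [hsa, hbt, gdist_comm' w x b]
      _ ≤ (walkWeight G w p₁ + (k + (walkWeight G w p₂ + W)))
            + ((k + (walkWeight G w p₃ + W)) + walkWeight G w p₄) := by
          gcongr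
      _ = (walkWeight G w p₁ + (walkWeight G w p₂ + (walkWeight G w p₃ + walkWeight G w p₄)))
            + (2 * W + 2 * k) := by ring
      _ = gdist G w s t + ENNReal.ofReal (2 + ε) * W := by rw [htot, hkW]
  exact absurd hfinal (not_le.mpr hviol)
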